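/- arXiv:2208.10749 — 3 statements merged into one kernel-verified Lean document; each statement's English description precedes it below -/
import Mathlib

section
/- Let G be a weakly closed graph on {1,...,n} and let C be the vertex set of a connected component of G (i.e., of the induced subgraph on all of {1,...,n}). Then C is an interval: if a, b ∈ C and a ≤ l ≤ b, then l ∈ C. -/
def WeaklyClosed {n : ℕ} (G : SimpleGraph (Fin n)) : Prop :=
  ∀ i j k : Fin n, i < j → j < k → G.Adj i k → G.Adj i j ∨ G.Adj j k

lemma weaklyClosed_walk_aux {n : ℕ} (G : SimpleGraph (Fin n)) (hwc : WeaklyClosed G) :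
    ∀ {a b : Fin n}, G.Walk a b → ∀ l : Fin n, a ≤ l → l ≤ b → G.Reachable a l := by
  intro a b w
  induction w with
  | nil =>
    intro l h1 h2
    have : l = _ := le_antisymm h2 h1
    subst this
    exact SimpleGraph.Reachable.refl _
  | @cons u v b h p ih =>
    intro l h1 h2
    rcases eq_or_lt_of_le h1 with rfl | hal
    · exact SimpleGraph.Reachable.refl _
    rcases lt_trichotomy v l with hvl | rfl | hlv
    · exact h.reachable.trans (ih l hvl.le h2)
    · exact h.reachable
    · rcases hwc u l v hal hlv h with h' | h'
      · exact h'.reachable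
      · exact (h.reachable).trans h'.symm.reachable

/-- The vertex set of every connected component of a weakly closed graph is an
interval: if `a` and `b` lie in the same component and `a ≤ l ≤ b`, then `l` lies in
that component. -/
theorem weaklyClosed_component_isInterval {n : ℕ} (G : SimpleGraph (Fin n))
    (hwc : WeaklyClosed G) :
    ∀ a b l : Fin n, G.Reachable a b → a ≤ l → l ≤ b → G.Reachable a l := by
  intro a b l hab hal hlb
  obtain ⟨w⟩ := hab
  exact weaklyClosed_walk_aux G hwc w l hal hlb
end

section
/- Let R = K[x₁,...,xₙ,y₁,...,yₙ], f_{ij} = x_i y_j − x_j y_i, and I = (y₁, f_{12}, ..., f_{k-1,k}). If P is a minimal prime of I, then either P = (y₁,...,y_k), or there exists i with 2 ≤ i ≤ k such that P ⊇ (y₁, ..., y_{i-1}, x_{i-1}) and P/(y₁,...,y_{i-1},x_{i-1}) corresponds to a minimal prime of (f_{i,i+1}, ..., f_{k-1,k}); in particular every minimal prime of I contains either x₁ or y₂. -/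
open MvPolynomial

/-- The variable `xᵢ` of `R = K[x₁,...,xₙ,y₁,...,yₙ]`. -/
noncomputable def xx {K : Type*} [Field K] {n : ℕ} (i : Fin n) :
    MvPolynomial (Fin n ⊕ Fin n) K := X (Sum.inl i)

/-- The variable `yᵢ` of `R = K[x₁,...,xₙ,y₁,...,yₙ]`. -/
noncomputable def yy {K : Type*} [Field K] {n : ℕ} (i : Fin n) :
    MvPolynomial (Fin n ⊕ Fin n) K := X (Sum.inr i)

/-- The `2×2` minor `f_{ij} = xᵢyⱼ - xⱼyᵢ` of the generic `2×n` matrix. -/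
noncomputable def fm {K : Type*} [Field K] {n : ℕ} (i j : Fin n) :
    MvPolynomial (Fin n ⊕ Fin n) K := xx i * yy j - xx j * yy i

section Helpers

variable {K : Type*} [Field K] {σ : Type*} (s : Set σ) [DecidablePred (· ∈ s)]


noncomputable def killVars : MvPolynomial σ K →ₐ[K] MvPolynomial σ K :=
  aeval (fun v => if v ∈ s then 0 else X v)

lemma killVars_X_mem {v : σ} (h : v ∈ s) : killVars s (X v : MvPolynomial σ K) = 0 := by
  simp [killVars, h]

lemma killVars_X_not_mem {v : σ} (h : v ∉ s) :
    killVars s (X v : MvPolynomial σ K) = X v := by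
  simp [killVars, h]

lemma sub_killVars_mem (p : MvPolynomial σ K) :
    p - killVars s p ∈ Ideal.span (X '' s : Set (MvPolynomial σ K)) := by
  induction p using MvPolynomial.induction_on with
  | C a => simp [killVars]
  | add p q hp hq =>
      have := Ideal.add_mem _ hp hq
      simpa [map_add, sub_add_sub_comm] using this
  | mul_X p v hp =>
      rw [map_mul]
      by_cases h : v ∈ s
      · rw [killVars_X_mem s h, mul_zero, sub_zero]
        exact Ideal.mul_mem_left _ _ (Ideal.subset_span ⟨v, h, rfl⟩)
      · rw [killVars_X_not_mem s h, ← sub_mul]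
        exact Ideal.mul_mem_right _ _ hp

lemma span_X_eq_ker :
    Ideal.span (X '' s : Set (MvPolynomial σ K)) = RingHom.ker (killVars s).toRingHom := by
  apply le_antisymm
  · rw [Ideal.span_le]
    rintro _ ⟨v, hv, rfl⟩
    simpa [RingHom.mem_ker] using killVars_X_mem s hv
  · intro p hp
    rw [RingHom.mem_ker] at hp
    have h2 := sub_killVars_mem s p
    rwa [show (killVars s) p = 0 from hp, sub_zero] at h2

lemma span_X_isPrime : (Ideal.span (X '' s : Set (MvPolynomial σ K))).IsPrime := by
  rw [span_X_eq_ker]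
  exact RingHom.ker_isPrime _

lemma killVars_eq_constantCoeff (p : MvPolynomial σ K) :
    ((renameEquiv K (Equiv.sumCompl (· ∈ s)).symm).trans
        (sumAlgEquiv K {v // v ∈ s} {v // ¬ v ∈ s})) (killVars s p) =
      C (constantCoeff (((renameEquiv K (Equiv.sumCompl (· ∈ s)).symm).trans
        (sumAlgEquiv K {v // v ∈ s} {v // ¬ v ∈ s})) p)) := by
  set Φ := ((renameEquiv K (Equiv.sumCompl (· ∈ s)).symm).trans
      (sumAlgEquiv K {v // v ∈ s} {v // ¬ v ∈ s})) with hΦ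
  have hXmem : ∀ v (h : v ∈ s), Φ (X v) = X ⟨v, h⟩ := by
    intro v h
    simp [hΦ, Equiv.sumCompl_symm_apply_of_pos h, sumRingEquiv,
      mvPolynomialEquivMvPolynomial, sumToIter_Xl]
  have hXnot : ∀ v (h : ¬ v ∈ s), Φ (X v) = C (X ⟨v, h⟩) := by
    intro v h
    simp [hΦ, Equiv.sumCompl_symm_apply_of_neg h, sumRingEquiv,
      mvPolynomialEquivMvPolynomial, sumToIter_Xr]
  induction p using MvPolynomial.induction_on with
  | C a =>
      have : killVars s (C a : MvPolynomial σ K) = C a := by simp [killVars]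
      rw [this]
      have hCa : Φ (C a : MvPolynomial σ K) = C (C a) := by
        rw [← MvPolynomial.algebraMap_eq, AlgEquiv.commutes]
        rfl
      rw [hCa]; simp
  | add p q hp hq => simp [map_add, hp, hq]
  | mul_X p v hp =>
      rw [map_mul, map_mul, map_mul]
      by_cases h : v ∈ s
      · rw [killVars_X_mem s h, hXmem v h]
        simp
      · rw [killVars_X_not_mem s h, hXnot v h, hp]
        rw [map_mul, constantCoeff_C]
        exact (map_mul C _ _).symm

lemma killVars_mem_of_mem_minimalPrimes (G : Set (MvPolynomial σ K))
    (hG : ∀ g ∈ G, killVars s g = g) {Q : Ideal (MvPolynomial σ K)}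
    (hQ : Q ∈ (Ideal.span G).minimalPrimes) {q : MvPolynomial σ K} (hq : q ∈ Q) :
    killVars s q ∈ Q := by
  set Φ := ((renameEquiv K (Equiv.sumCompl (· ∈ s)).symm).trans
      (sumAlgEquiv K {v // v ∈ s} {v // ¬ v ∈ s})) with hΦ
  haveI hQp : Q.IsPrime := hQ.1.1
  set Qh : Ideal (MvPolynomial {v // v ∈ s} (MvPolynomial {v // ¬ v ∈ s} K)) :=
    Ideal.comap Φ.symm.toAlgHom.toRingHom Q with hQh
  haveI : Qh.IsPrime := Ideal.IsPrime.comap _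
  set Q0 := Ideal.comap (C : MvPolynomial {v // ¬ v ∈ s} K →+* _) Qh with hQ0
  haveI : Q0.IsPrime := Ideal.IsPrime.comap _
  set M := Ideal.map (C : MvPolynomial {v // ¬ v ∈ s} K →+* _) Q0 with hM
  have hMker : M = RingHom.ker (MvPolynomial.map (σ := {v // v ∈ s}) (Ideal.Quotient.mk Q0)) := by
    rw [MvPolynomial.ker_map, Ideal.mk_ker]
  haveI : M.IsPrime := by rw [hMker]; exact RingHom.ker_isPrime _
  set E := Ideal.comap Φ.toAlgHom.toRingHom M with hE
  haveI : E.IsPrime := Ideal.IsPrime.comap _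
  have hMQh : M ≤ Qh := Ideal.map_le_iff_le_comap.mpr le_rfl
  have hmemE : ∀ r, r ∈ E ↔ Φ r ∈ M := fun r => Iff.rfl
  have hmemQh : ∀ b, b ∈ Qh ↔ Φ.symm b ∈ Q := fun b => Iff.rfl
  -- span G ≤ E
  have hGE : Ideal.span G ≤ E := by
    rw [Ideal.span_le]
    intro g hg
    have h1 : Φ g = C (constantCoeff (Φ g)) := by
      conv_lhs => rw [← hG g hg]
      exact killVars_eq_constantCoeff s g
    have : Φ g ∈ M := by
      rw [h1]
      apply Ideal.mem_map_of_mem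
      rw [hQ0, Ideal.mem_comap]
      show C (constantCoeff (Φ g)) ∈ Qh
      rw [hmemQh, ← h1, AlgEquiv.symm_apply_apply]
      exact hQ.1.2 (Ideal.subset_span hg)
    exact this
  have hEQ : E ≤ Q := by
    intro r hr
    rw [hmemE] at hr
    have : Φ r ∈ Qh := hMQh hr
    rw [hmemQh, AlgEquiv.symm_apply_apply] at this
    exact this
  have hQE : Q = E := le_antisymm (hQ.2 ⟨‹E.IsPrime›, hGE⟩ hEQ) hEQ
  -- now conclude
  have hqE : q ∈ E := hQE ▸ hq
  rw [hmemE] at hqE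
  have hcc : constantCoeff (Φ q) ∈ Q0 := by
    have h2 := Ideal.mem_map_of_mem (constantCoeff :
      MvPolynomial {v // v ∈ s} (MvPolynomial {v // ¬ v ∈ s} K) →+* _) hqE
    rw [hM, Ideal.map_map] at h2
    have h3 : (constantCoeff :
        MvPolynomial {v // v ∈ s} (MvPolynomial {v // ¬ v ∈ s} K) →+* _).comp
        (C : MvPolynomial {v // ¬ v ∈ s} K →+* _) = RingHom.id _ :=
      RingHom.ext fun a => constantCoeff_C _ a
    rwa [h3, Ideal.map_id] at h2
  have : killVars s q ∈ E := by
    rw [hmemE, killVars_eq_constantCoeff s q]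
    exact Ideal.mem_map_of_mem _ hcc
  rw [hQE]
  exact this

end Helpers

/-- (0-based indexing.) Every minimal prime `P` of `I = (y₁, f_{12}, ..., f_{k-1,k})`
is either `(y₁,...,y_k)`, or contains `(y₁,...,y_{i-1},x_{i-1})` for some `2 ≤ i ≤ k`
and equals the sum of that ideal with a minimal prime of the binomial edge ideal of
the path `{i,i+1}, ..., {k-1,k}`; in particular `P` contains `x₁` or `y₂`. -/

theorem minimalPrimes_structure {K : Type*} [Field K] {n k : ℕ} (hk : 2 ≤ k) (hkn : k ≤ n)
    (P : Ideal (MvPolynomial (Fin n ⊕ Fin n) K))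
    (hP : P ∈ (Ideal.span ({yy (K := K) (n := n) ⟨0, by omega⟩} ∪
      {p | ∃ i : ℕ, ∃ h : i + 1 < k, p = fm ⟨i, by omega⟩ ⟨i + 1, by omega⟩})).minimalPrimes) :
    (P = Ideal.span {p | ∃ i : ℕ, ∃ h : i < k, p = yy ⟨i, by omega⟩} ∨
      ∃ i : ℕ, ∃ hi : 1 ≤ i ∧ i ≤ k - 1,
        ∃ Q ∈ (Ideal.span {p : MvPolynomial (Fin n ⊕ Fin n) K |
            ∃ j : ℕ, ∃ h : i ≤ j ∧ j + 1 < k, p = fm ⟨j, by omega⟩ ⟨j + 1, by omega⟩}).minimalPrimes,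
          P = Ideal.span ({p | ∃ j : ℕ, ∃ h : j < i, p = yy ⟨j, by omega⟩} ∪
            {xx ⟨i - 1, by omega⟩}) ⊔ Q) ∧
    (xx ⟨0, by omega⟩ ∈ P ∨ yy ⟨1, by omega⟩ ∈ P) := by
  classical
  haveI hPp : P.IsPrime := hP.1.1
  have hIP := hP.1.2
  have hy0 : yy (K := K) (n := n) ⟨0, by omega⟩ ∈ P :=
    hIP (Ideal.subset_span (Or.inl rfl))
  have fmem : ∀ j : ℕ, ∀ h : j + 1 < k,
      fm (K := K) (n := n) ⟨j, by omega⟩ ⟨j + 1, by omega⟩ ∈ P :=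
    fun j h => hIP (Ideal.subset_span (Or.inr ⟨j, h, rfl⟩))
  -- second conjunct
  have hsecond : xx (K := K) (n := n) ⟨0, by omega⟩ ∈ P ∨ yy (K := K) (n := n) ⟨1, by omega⟩ ∈ P := by
    have hxy : xx (K := K) (n := n) ⟨0, by omega⟩ * yy (K := K) (n := n) ⟨1, by omega⟩ ∈ P := by
      have heq : xx (K := K) (n := n) ⟨0, by omega⟩ * yy (K := K) (n := n) ⟨1, by omega⟩ =
          fm ⟨0, by omega⟩ ⟨0 + 1, by omega⟩ +
            xx (K := K) (n := n) ⟨0 + 1, by omega⟩ * yy ⟨0, by omega⟩ := by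
        rw [fm]; ring_nf
      rw [heq]
      exact Ideal.add_mem _ (fmem 0 (by omega)) (Ideal.mul_mem_left _ _ hy0)
    exact hPp.mem_or_mem hxy
  refine ⟨?_, hsecond⟩
  -- the walk
  have walk : ∀ m, ∀ hm : m ≤ k,
      (∀ j : ℕ, ∀ hj : j < m, yy (K := K) (n := n) ⟨j, by omega⟩ ∈ P) ∨
      ∃ i : ℕ, ∃ _ : 1 ≤ i ∧ i < m,
        (∀ j : ℕ, ∀ hj : j < i, yy (K := K) (n := n) ⟨j, by omega⟩ ∈ P) ∧
        xx (K := K) (n := n) ⟨i - 1, by omega⟩ ∈ P := by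
    intro m
    induction m with
    | zero => intro _; left; intro j hj; omega
    | succ m ih =>
      intro hm
      rcases ih (by omega) with hy | ⟨i, hi, h3, h4⟩
      · by_cases hym : yy (K := K) (n := n) ⟨m, by omega⟩ ∈ P
        · left
          intro j hj
          rcases Nat.lt_succ_iff_lt_or_eq.mp hj with h | rfl
          · exact hy j h
          · exact hym
        · rcases Nat.eq_zero_or_pos m with rfl | hm1
          · exact absurd hy0 hym
          · obtain ⟨j, rfl⟩ : ∃ j, m = j + 1 := ⟨m - 1, by omega⟩
            right
            refine ⟨j + 1, ⟨by omega, by omega⟩, hy, ?_⟩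
            have hf := fmem j (by omega)
            have hyj : yy (K := K) (n := n) ⟨j, by omega⟩ ∈ P := hy j (by omega)
            have hxy : xx (K := K) (n := n) ⟨j, by omega⟩ *
                yy (K := K) (n := n) ⟨j + 1, by omega⟩ ∈ P := by
              have heq : xx (K := K) (n := n) ⟨j, by omega⟩ * yy ⟨j + 1, by omega⟩ =
                  fm ⟨j, by omega⟩ ⟨j + 1, by omega⟩ +
                    xx (K := K) (n := n) ⟨j + 1, by omega⟩ * yy ⟨j, by omega⟩ := by
                rw [fm]; ring_nf
              rw [heq]
              exact Ideal.add_mem _ hf (Ideal.mul_mem_left _ _ hyj)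
            rcases hPp.mem_or_mem hxy with h | h
            · exact h
            · exact absurd h hym
      · exact Or.inr ⟨i, ⟨hi.1, by omega⟩, h3, h4⟩
  rcases walk k le_rfl with hy | ⟨i, ⟨hi1, hik⟩, hyl, hxi⟩
  · -- P = (y_0, ..., y_{k-1})
    left
    set Y := Ideal.span {p : MvPolynomial (Fin n ⊕ Fin n) K |
      ∃ i : ℕ, ∃ h : i < k, p = yy ⟨i, by omega⟩} with hY
    have hYset : (X '' {w : Fin n ⊕ Fin n | ∃ j : ℕ, ∃ _ : j < k, w = Sum.inr ⟨j, by omega⟩} :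
        Set (MvPolynomial (Fin n ⊕ Fin n) K)) =
        {p | ∃ i : ℕ, ∃ h : i < k, p = yy ⟨i, by omega⟩} := by
      ext q
      constructor
      · rintro ⟨w, ⟨j, hj, rfl⟩, rfl⟩
        exact ⟨j, hj, rfl⟩
      · rintro ⟨j, hj, rfl⟩
        exact ⟨Sum.inr ⟨j, by omega⟩, ⟨j, hj, rfl⟩, rfl⟩
    have hYprime : Y.IsPrime := by
      rw [hY, ← hYset]
      exact span_X_isPrime _
    have hYP : Y ≤ P := by
      rw [hY, Ideal.span_le]
      rintro _ ⟨j, hj, rfl⟩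
      exact hy j hj
    have hIY : Ideal.span ({yy (K := K) (n := n) ⟨0, by omega⟩} ∪
        {p | ∃ i : ℕ, ∃ h : i + 1 < k, p = fm ⟨i, by omega⟩ ⟨i + 1, by omega⟩}) ≤ Y := by
      rw [Ideal.span_le]
      rintro q (rfl | ⟨j, hj, rfl⟩)
      · exact Ideal.subset_span ⟨0, by omega, rfl⟩
      · rw [fm]
        exact Ideal.sub_mem _
          (Ideal.mul_mem_left _ _ (Ideal.subset_span ⟨j + 1, by omega, rfl⟩))
          (Ideal.mul_mem_left _ _ (Ideal.subset_span ⟨j, by omega, rfl⟩))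
    exact le_antisymm (hP.2 ⟨hYprime, hIY⟩ hYP) hYP
  · right
    refine ⟨i, ⟨hi1, by omega⟩, ?_⟩
    set F := {p : MvPolynomial (Fin n ⊕ Fin n) K |
      ∃ j : ℕ, ∃ h : i ≤ j ∧ j + 1 < k, p = fm ⟨j, by omega⟩ ⟨j + 1, by omega⟩} with hF
    have hFP : Ideal.span F ≤ P := by
      rw [Ideal.span_le]
      rintro _ ⟨j, ⟨hij, hjk⟩, rfl⟩
      exact fmem j hjk
    obtain ⟨Q, hQmin, hQP⟩ := Ideal.exists_minimalPrimes_le hFP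
    haveI hQp : Q.IsPrime := hQmin.1.1
    refine ⟨Q, hQmin, ?_⟩
    set sJ : Set (Fin n ⊕ Fin n) := {w | w = Sum.inl ⟨i - 1, by omega⟩ ∨
      ∃ j : ℕ, ∃ _ : j < i, w = Sum.inr ⟨j, by omega⟩} with hsJ
    set J := Ideal.span (({p | ∃ j : ℕ, ∃ h : j < i, p = yy ⟨j, by omega⟩} ∪
      {xx ⟨i - 1, by omega⟩}) : Set (MvPolynomial (Fin n ⊕ Fin n) K)) with hJ
    have hJset : (X '' sJ : Set (MvPolynomial (Fin n ⊕ Fin n) K)) =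
        ({p | ∃ j : ℕ, ∃ h : j < i, p = yy ⟨j, by omega⟩} ∪ {xx ⟨i - 1, by omega⟩}) := by
      ext q
      constructor
      · rintro ⟨w, (rfl | ⟨j, hj, rfl⟩), rfl⟩
        · exact Or.inr rfl
        · exact Or.inl ⟨j, hj, rfl⟩
      · rintro (⟨j, hj, rfl⟩ | rfl)
        · exact ⟨Sum.inr ⟨j, by omega⟩, Or.inr ⟨j, hj, rfl⟩, rfl⟩
        · exact ⟨Sum.inl ⟨i - 1, by omega⟩, Or.inl rfl, rfl⟩
    have hGfix : ∀ g ∈ F, killVars sJ g = g := by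
      rintro _ ⟨j, ⟨hij, hjk⟩, rfl⟩
      have h1 : (Sum.inl ⟨j, by omega⟩ : Fin n ⊕ Fin n) ∉ sJ := by
        rintro (h | ⟨j', hj', h⟩)
        · rw [Sum.inl.injEq, Fin.mk.injEq] at h; omega
        · exact Sum.inl_ne_inr h
      have h2 : (Sum.inl ⟨j + 1, by omega⟩ : Fin n ⊕ Fin n) ∉ sJ := by
        rintro (h | ⟨j', hj', h⟩)
        · rw [Sum.inl.injEq, Fin.mk.injEq] at h; omega
        · exact Sum.inl_ne_inr h
      have h3 : (Sum.inr ⟨j, by omega⟩ : Fin n ⊕ Fin n) ∉ sJ := by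
        rintro (h | ⟨j', hj', h⟩)
        · exact Sum.inr_ne_inl h
        · rw [Sum.inr.injEq, Fin.mk.injEq] at h; omega
      have h4 : (Sum.inr ⟨j + 1, by omega⟩ : Fin n ⊕ Fin n) ∉ sJ := by
        rintro (h | ⟨j', hj', h⟩)
        · exact Sum.inr_ne_inl h
        · rw [Sum.inr.injEq, Fin.mk.injEq] at h; omega
      rw [fm, xx, yy, xx, yy, map_sub, map_mul, map_mul,
        killVars_X_not_mem _ h1, killVars_X_not_mem _ h4,
        killVars_X_not_mem _ h2, killVars_X_not_mem _ h3]
    have hkill : ∀ q ∈ Q, killVars sJ q ∈ Q := fun q hq =>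
      killVars_mem_of_mem_minimalPrimes sJ F hGfix hQmin hq
    have hJQ : J ⊔ Q = Ideal.comap (killVars sJ).toRingHom Q := by
      apply le_antisymm
      · apply sup_le
        · rw [hJ, ← hJset, Ideal.span_le]
          rintro _ ⟨w, hw, rfl⟩
          rw [SetLike.mem_coe, Ideal.mem_comap]
          show killVars sJ (X w) ∈ Q
          rw [killVars_X_mem _ hw]
          exact Q.zero_mem
        · intro q hq
          rw [Ideal.mem_comap]
          exact hkill q hq
      · intro r hr
        rw [Ideal.mem_comap] at hr
        have h5 : r - killVars sJ r ∈ J := by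
          rw [hJ, ← hJset]
          exact sub_killVars_mem sJ r
        have : r = (r - killVars sJ r) + killVars sJ r := by ring
        rw [this]
        exact Ideal.add_mem _ (Ideal.mem_sup_left h5) (Ideal.mem_sup_right hr)
    have hJQprime : (J ⊔ Q).IsPrime := by
      rw [hJQ]
      exact Ideal.IsPrime.comap _
    have hJP : J ≤ P := by
      rw [hJ, Ideal.span_le]
      rintro q (⟨j, hj, rfl⟩ | rfl)
      · exact hyl j hj
      · exact hxi
    have hJQP : J ⊔ Q ≤ P := sup_le hJP hQP
    have hIJQ : Ideal.span ({yy (K := K) (n := n) ⟨0, by omega⟩} ∪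
        {p | ∃ i : ℕ, ∃ h : i + 1 < k, p = fm ⟨i, by omega⟩ ⟨i + 1, by omega⟩}) ≤ J ⊔ Q := by
      rw [Ideal.span_le]
      rintro q (rfl | ⟨j, hj, rfl⟩)
      · exact Ideal.mem_sup_left (Ideal.subset_span (Or.inl ⟨0, by omega, rfl⟩))
      · by_cases hij : i ≤ j
        · exact Ideal.mem_sup_right (hQmin.1.2 (Ideal.subset_span ⟨j, ⟨hij, hj⟩, rfl⟩))
        · apply Ideal.mem_sup_left
          by_cases hij2 : j + 1 < i
          · rw [fm]
            exact Ideal.sub_mem _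
              (Ideal.mul_mem_left _ _ (Ideal.subset_span (Or.inl ⟨j + 1, by omega, rfl⟩)))
              (Ideal.mul_mem_left _ _ (Ideal.subset_span (Or.inl ⟨j, by omega, rfl⟩)))
          · -- j + 1 = i
            obtain rfl : i = j + 1 := by omega
            rw [fm]
            exact Ideal.sub_mem _
              (Ideal.mul_mem_right _ _ (Ideal.subset_span (Or.inr rfl)))
              (Ideal.mul_mem_left _ _ (Ideal.subset_span (Or.inl ⟨j, by omega, rfl⟩)))
    exact le_antisymm (hP.2 ⟨hJQprime, hIJQ⟩ hJQP) hJQP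
end

section
/- Let R = K[x₁,...,xₙ,y₁,...,yₙ] and let P = (x_s, y_s : s ∈ S) + I₂(X_{[a₁,b₁]}) + ... + I₂(X_{[a_c,b_c]}), where S ⊆ {1,...,n} and [a₁,b₁], ..., [a_c,b_c] are pairwise disjoint intervals in {1,...,n} \ S. Then P is a prime ideal of R. -/
open MvPolynomial

namespace SpanPrimeAux

open scoped Classical

variable {K : Type*} [Field K] {n c : ℕ}

/-- the interval index containing `v`, if any -/
noncomputable def iOf (a b : Fin c → Fin n) (v : Fin n) : Option (Fin c) :=
  if h : ∃ i, v ∈ Finset.Icc (a i) (b i) then some h.choose else none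

lemma iOf_mem {a b : Fin c → Fin n} {v : Fin n} {i : Fin c} (h : iOf a b v = some i) :
    v ∈ Finset.Icc (a i) (b i) := by
  unfold iOf at h
  split at h
  · rename_i he
    obtain rfl : he.choose = i := Option.some.inj h
    exact he.choose_spec
  · exact absurd h (by simp)

lemma mem_iOf {a b : Fin c → Fin n}
    (hdisj : ∀ i j, i ≠ j → ∀ v : Fin n, ¬ (a i ≤ v ∧ v ≤ b i ∧ a j ≤ v ∧ v ≤ b j))
    {v : Fin n} {i : Fin c} (h : v ∈ Finset.Icc (a i) (b i)) : iOf a b v = some i := by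
  have he : ∃ j, v ∈ Finset.Icc (a j) (b j) := ⟨i, h⟩
  have h1 : iOf a b v = some he.choose := by unfold iOf; rw [dif_pos he]
  have h2 := he.choose_spec
  rcases eq_or_ne he.choose i with h3 | h3
  · rw [h1, h3]
  · rw [Finset.mem_Icc] at h h2
    exact absurd ⟨h2.1, h2.2, h.1, h.2⟩ (hdisj _ _ h3 v)

/-- exponent vector of the image of a variable -/
noncomputable def expOf (a b : Fin c → Fin n) (w : Fin n ⊕ Fin n) :
    (Fin n ⊕ (Fin n ⊕ Fin c)) →₀ ℕ :=
  match w with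
  | .inl v => Finsupp.single (.inl v) 1
  | .inr v =>
    match iOf a b v with
    | some i => Finsupp.single (.inl v) 1 + Finsupp.single (.inr (.inr i)) 1
    | none => Finsupp.single (.inr (.inl v)) 1

/-- images of the variables -/
noncomputable def f (S : Set (Fin n)) (a b : Fin c → Fin n) (w : Fin n ⊕ Fin n) :
    MvPolynomial (Fin n ⊕ (Fin n ⊕ Fin c)) K :=
  if (Sum.elim (· ∈ S) (· ∈ S) w) then 0 else monomial (expOf a b w) 1

/-- image exponent of a monomial exponent -/
noncomputable def E (a b : Fin c → Fin n) (d : (Fin n ⊕ Fin n) →₀ ℕ) :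
    (Fin n ⊕ (Fin n ⊕ Fin c)) →₀ ℕ :=
  ∑ w : Fin n ⊕ Fin n, d w • expOf a b w

lemma E_apply (a b : Fin c → Fin n) (d : (Fin n ⊕ Fin n) →₀ ℕ) (x) :
    E a b d x = ∑ w : Fin n ⊕ Fin n, d w * expOf a b w x := by
  rw [E, Finset.sum_apply']
  simp [Finsupp.smul_apply]

lemma E_add (a b : Fin c → Fin n) (d₁ d₂ : (Fin n ⊕ Fin n) →₀ ℕ) :
    E a b (d₁ + d₂) = E a b d₁ + E a b d₂ := by
  simp [E, add_smul, Finset.sum_add_distrib]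

lemma E_single (a b : Fin c → Fin n) (w : Fin n ⊕ Fin n) (k : ℕ) :
    E a b (Finsupp.single w k) = k • expOf a b w := by
  rw [E, Finset.sum_eq_single w]
  · simp
  · intro u _ hu; simp [Finsupp.single_apply, Ne.symm hu]
  · simp

lemma expOf_inr_apply_inl (a b : Fin c → Fin n) (u w : Fin n) :
    expOf a b (.inr u) (.inl w) =
      if u = w then (if (iOf a b u).isSome then 1 else 0) else 0 := by
  unfold expOf
  rcases h : iOf a b u with _ | i <;>
    simp [h, Finsupp.single_apply]

lemma expOf_inr_apply_u (a b : Fin c → Fin n) (u w : Fin n) :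
    expOf a b (.inr u) (.inr (.inl w)) =
      if u = w then (if (iOf a b u).isSome then 0 else 1) else 0 := by
  unfold expOf
  rcases h : iOf a b u with _ | i <;>
    simp [h, Finsupp.single_apply]

lemma expOf_inr_apply_s (a b : Fin c → Fin n) (u : Fin n) (i : Fin c) :
    expOf a b (.inr u) (.inr (.inr i)) = if iOf a b u = some i then 1 else 0 := by
  unfold expOf
  rcases h : iOf a b u with _ | j
  · simp [h, Finsupp.single_apply]
  · simp only [h, Finsupp.add_apply, Finsupp.single_apply]
    by_cases hji : j = i <;> simp [hji]

lemma E_apply_inl (a b : Fin c → Fin n) (d : (Fin n ⊕ Fin n) →₀ ℕ) (v : Fin n) :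
    E a b d (.inl v) = d (.inl v) +
      (if (iOf a b v).isSome then d (.inr v) else 0) := by
  rw [E_apply, Fintype.sum_sum_type]
  congr 1
  · simp only [expOf, Finsupp.single_apply, Sum.inl.injEq, mul_ite, mul_one, mul_zero]
    simp
  · simp only [expOf_inr_apply_inl, mul_ite, mul_one, mul_zero, ite_self]
    rw [Finset.sum_ite_eq' Finset.univ v
      (fun u => if (iOf a b u).isSome then d (.inr u) else 0)]
    simp [mul_ite]

lemma E_apply_u (a b : Fin c → Fin n) (d : (Fin n ⊕ Fin n) →₀ ℕ) (v : Fin n) :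
    E a b d (.inr (.inl v)) = if (iOf a b v).isSome then 0 else d (.inr v) := by
  rw [E_apply, Fintype.sum_sum_type]
  have h1 : ∀ u : Fin n, expOf a b (Sum.inl u) (Sum.inr (Sum.inl v)) = 0 := by
    intro u; simp [expOf, Finsupp.single_apply]
  simp only [h1, mul_zero, Finset.sum_const_zero, zero_add]
  simp only [expOf_inr_apply_u, mul_ite, mul_one, mul_zero, ite_self]
  rw [Finset.sum_ite_eq' Finset.univ v
    (fun u => if (iOf a b u).isSome then 0 else d (.inr u))]
  simp

lemma E_apply_s (a b : Fin c → Fin n)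
    (hdisj : ∀ i j, i ≠ j → ∀ v : Fin n, ¬ (a i ≤ v ∧ v ≤ b i ∧ a j ≤ v ∧ v ≤ b j))
    (d : (Fin n ⊕ Fin n) →₀ ℕ) (i : Fin c) :
    E a b d (.inr (.inr i)) = ∑ u ∈ Finset.Icc (a i) (b i), d (.inr u) := by
  rw [E_apply, Fintype.sum_sum_type]
  have h1 : ∀ u : Fin n, expOf a b (Sum.inl u) (Sum.inr (Sum.inr i)) = 0 := by
    intro u; simp [expOf, Finsupp.single_apply]
  simp only [h1, mul_zero, Finset.sum_const_zero, zero_add]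
  simp only [expOf_inr_apply_s, mul_ite, mul_one, mul_zero]
  rw [← Finset.sum_filter]
  apply Finset.sum_congr _ (fun _ _ => rfl)
  ext u
  simp only [Finset.mem_filter, Finset.mem_univ, true_and]
  constructor
  · exact fun h => iOf_mem h
  · exact fun h => mem_iOf hdisj h

/-- "bottom-fill" count of y-exponent at `v` recovered from an image exponent -/
noncomputable def betaOf (a b : Fin c → Fin n) (e : (Fin n ⊕ (Fin n ⊕ Fin c)) →₀ ℕ)
    (v : Fin n) : ℕ :=
  match iOf a b v with
  | some i => min (e (.inl v))
      (e (.inr (.inr i)) -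
        ∑ w ∈ (Finset.Icc (a i) (b i)).filter (· < v), e (.inl w))
  | none => 0

/-- normal-form exponent recovered from an image exponent -/
noncomputable def N (a b : Fin c → Fin n) (e : (Fin n ⊕ (Fin n ⊕ Fin c)) →₀ ℕ) :
    (Fin n ⊕ Fin n) →₀ ℕ :=
  Finsupp.equivFunOnFinite.symm fun w =>
    match w with
    | .inl v => e (.inl v) - betaOf a b e v
    | .inr v =>
      match iOf a b v with
      | some _ => betaOf a b e v
      | none => e (.inr (.inl v))

lemma N_apply_inl (a b : Fin c → Fin n) (e) (v : Fin n) :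
    N a b e (.inl v) = e (.inl v) - betaOf a b e v := rfl

lemma N_apply_inr_some (a b : Fin c → Fin n) (e) {v : Fin n} {i : Fin c}
    (h : iOf a b v = some i) : N a b e (.inr v) = betaOf a b e v := by
  show (match iOf a b v with
      | some _ => betaOf a b e v
      | none => e (.inr (.inl v))) = _
  rw [h]

lemma N_apply_inr_none (a b : Fin c → Fin n) (e) {v : Fin n}
    (h : iOf a b v = none) : N a b e (.inr v) = e (.inr (.inl v)) := by
  show (match iOf a b v with
      | some _ => betaOf a b e v
      | none => e (.inr (.inl v))) = _
  rw [h]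

/-- normal monomials: within each interval, all y's are below all x's -/
def Normal (a b : Fin c → Fin n) (d : (Fin n ⊕ Fin n) →₀ ℕ) : Prop :=
  ∀ i : Fin c, ∀ u v : Fin n, u ∈ Finset.Icc (a i) (b i) → v ∈ Finset.Icc (a i) (b i) →
    u < v → d (.inl u) = 0 ∨ d (.inr v) = 0

lemma beta_E (a b : Fin c → Fin n)
    (hdisj : ∀ i j, i ≠ j → ∀ v : Fin n, ¬ (a i ≤ v ∧ v ≤ b i ∧ a j ≤ v ∧ v ≤ b j))
    {d : (Fin n ⊕ Fin n) →₀ ℕ} (hnorm : Normal a b d) {v : Fin n} {i : Fin c}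
    (hv : v ∈ Finset.Icc (a i) (b i)) :
    betaOf a b (E a b d) v = d (.inr v) := by
  have hio : iOf a b v = some i := mem_iOf hdisj hv
  have hEv : E a b d (.inl v) = d (.inl v) + d (.inr v) := by
    rw [E_apply_inl, hio]; rfl
  unfold betaOf
  rw [hio]
  simp only [hEv, E_apply_s a b hdisj]
  set I : Finset (Fin n) := Finset.Icc (a i) (b i) with hI
  set F : Finset (Fin n) := I.filter (· < v) with hF
  have hmemI : ∀ w ∈ F, w ∈ I := fun w hw => (Finset.mem_filter.mp hw).1
  -- rewrite A := ∑ w ∈ F, E d (inl w)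
  have hA : ∑ w ∈ F, E a b d (.inl w) =
      (∑ w ∈ F, d (.inl w)) + ∑ w ∈ F, d (.inr w) := by
    rw [← Finset.sum_add_distrib]
    apply Finset.sum_congr rfl
    intro w hw
    rw [E_apply_inl, mem_iOf hdisj (hmemI w hw)]; rfl
  rw [hA]
  -- split D := ∑ w ∈ I, d (inr w)
  have hsplit : ∑ w ∈ I, d (.inr w) =
      (∑ w ∈ F, d (.inr w)) + (d (.inr v) + ∑ w ∈ I.filter (v < ·), d (.inr w)) := by
    rw [← Finset.sum_filter_add_sum_filter_not I (· < v)]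
    congr 1
    have hvmem : v ∈ I.filter (fun w => ¬ w < v) := by
      simp [Finset.mem_filter, hv, hI]; exact Finset.mem_Icc.mp hv
    rw [← Finset.add_sum_erase _ _ hvmem]
    congr 1
    apply Finset.sum_congr _ (fun _ _ => rfl)
    ext w
    simp only [Finset.mem_erase, Finset.mem_filter]
    constructor
    · rintro ⟨hne, hwI, hnlt⟩
      exact ⟨hwI, lt_of_le_of_ne (not_lt.mp hnlt) (Ne.symm hne)⟩
    · rintro ⟨hwI, hlt⟩
      exact ⟨ne_of_gt hlt, hwI, not_lt.mpr (le_of_lt hlt)⟩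
  rw [hsplit]
  set B := ∑ w ∈ F, d (.inr w)
  set C := ∑ w ∈ F, d (.inl w)
  set G := ∑ w ∈ I.filter (v < ·), d (.inr w)
  by_cases hG : G = 0
  · by_cases hdv : d (.inr v) = 0
    · -- D - A = (B + 0) - (C+B) ≤ 0
      rw [hdv]
      simp only [add_zero, zero_add]
      have : B + G - (C + B) = 0 := by omega
      rw [hG] at this ⊢
      simp only [add_zero] at this ⊢
      omega
    · -- all x-exponents below v vanish
      have hC : C = 0 := by
        apply Finset.sum_eq_zero
        intro w hw
        rcases hnorm i w v (hmemI w hw) hv (Finset.mem_filter.mp hw).2 with h | h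
        · exact h
        · exact absurd h hdv
      rw [hC, hG]
      omega
  · -- some y-exponent above v is nonzero
    obtain ⟨w, hwmem, hw⟩ := Finset.exists_ne_zero_of_sum_ne_zero hG
    rw [Finset.mem_filter] at hwmem
    have hxzero : ∀ u' : Fin n, u' ∈ I → u' ≤ v → d (.inl u') = 0 := by
      intro u' hu' hle
      rcases hnorm i u' w hu' hwmem.1 (lt_of_le_of_lt hle hwmem.2) with h | h
      · exact h
      · exact absurd h hw
    have hC : C = 0 := Finset.sum_eq_zero fun w' hw' =>
      hxzero w' (hmemI w' hw') (le_of_lt (Finset.mem_filter.mp hw').2)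
    have hdiv : d (.inl v) = 0 := hxzero v hv le_rfl
    rw [hC, hdiv]
    omega

lemma N_E (a b : Fin c → Fin n)
    (hdisj : ∀ i j, i ≠ j → ∀ v : Fin n, ¬ (a i ≤ v ∧ v ≤ b i ∧ a j ≤ v ∧ v ≤ b j))
    {d : (Fin n ⊕ Fin n) →₀ ℕ} (hnorm : Normal a b d) :
    N a b (E a b d) = d := by
  ext w
  rcases w with v | v
  · rw [N_apply_inl]
    rcases hio : iOf a b v with _ | i
    · rw [E_apply_inl, hio]
      show d (.inl v) + 0 - betaOf a b (E a b d) v = _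
      unfold betaOf
      rw [hio]
      show d (.inl v) + 0 - 0 = d (.inl v)
      omega
    · rw [beta_E a b hdisj hnorm (iOf_mem hio), E_apply_inl, hio]
      show d (.inl v) + d (.inr v) - d (.inr v) = _
      omega
  · rcases hio : iOf a b v with _ | i
    · rw [N_apply_inr_none a b _ hio, E_apply_u, hio]
      rfl
    · rw [N_apply_inr_some a b _ hio, beta_E a b hdisj hnorm (iOf_mem hio)]

/-- the generating set of the ideal -/
def gens (S : Set (Fin n)) (a b : Fin c → Fin n) :
    Set (MvPolynomial (Fin n ⊕ Fin n) K) :=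
  {p | ∃ s ∈ S, p = xx s ∨ p = yy s} ∪
    {p | ∃ i, ∃ u v : Fin n, a i ≤ u ∧ u < v ∧ v ≤ b i ∧ p = fm u v}

/-- exponent vectors avoiding the variables from `S` -/
def Good (S : Set (Fin n)) (d : (Fin n ⊕ Fin n) →₀ ℕ) : Prop :=
  ∀ s ∈ S, d (.inl s) = 0 ∧ d (.inr s) = 0

lemma Good.add {S : Set (Fin n)} {d e : (Fin n ⊕ Fin n) →₀ ℕ}
    (hd : Good S d) (he : Good S e) : Good S (d + e) := fun s hs =>
  ⟨by rw [Finsupp.add_apply, (hd s hs).1, (he s hs).1],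
   by rw [Finsupp.add_apply, (hd s hs).2, (he s hs).2]⟩

lemma Good.tsub {S : Set (Fin n)} {d e : (Fin n ⊕ Fin n) →₀ ℕ}
    (hd : Good S d) : Good S (d - e) := fun s hs => by
  have h1 : (d - e) (Sum.inl s) ≤ d (Sum.inl s) := by
    rw [Finsupp.tsub_apply]; exact Nat.sub_le _ _
  have h2 : (d - e) (Sum.inr s) ≤ d (Sum.inr s) := by
    rw [Finsupp.tsub_apply]; exact Nat.sub_le _ _
  have := hd s hs
  omega

lemma Good.single_inl {S : Set (Fin n)} {u : Fin n} (h : u ∉ S) (k : ℕ) :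
    Good S (Finsupp.single (Sum.inl u) k) := fun s hs => by
  have hus : u ≠ s := fun h' => h (h' ▸ hs)
  constructor <;> simp [Finsupp.single_apply, hus]

lemma Good.single_inr {S : Set (Fin n)} {u : Fin n} (h : u ∉ S) (k : ℕ) :
    Good S (Finsupp.single (Sum.inr u) k) := fun s hs => by
  have hus : u ≠ s := fun h' => h (h' ▸ hs)
  constructor <;> simp [Finsupp.single_apply, hus]

lemma prod_monomial {ι : Type*} (s : Finset ι)
    (e : ι → ((Fin n ⊕ (Fin n ⊕ Fin c)) →₀ ℕ)) :
    (∏ w ∈ s, (monomial (e w) (1 : K))) = monomial (∑ w ∈ s, e w) 1 := by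
  induction s using Finset.induction_on with
  | empty => simp [monomial_zero']
  | insert _ _ hni ih =>
    rw [Finset.prod_insert hni, Finset.sum_insert hni, ih, monomial_mul, one_mul]

lemma expOf_inl_eq (a b : Fin c → Fin n) (v : Fin n) :
    expOf a b (.inl v) = Finsupp.single (.inl v) 1 := rfl

lemma expOf_inr_eq (a b : Fin c → Fin n) {v : Fin n} {i : Fin c}
    (h : iOf a b v = some i) :
    expOf a b (.inr v) = Finsupp.single (.inl v) 1 + Finsupp.single (.inr (.inr i)) 1 := by
  have h0 : expOf a b (.inr v) = match iOf a b v with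
      | some i => Finsupp.single (.inl v) 1 + Finsupp.single (.inr (.inr i)) 1
      | none => Finsupp.single (.inr (.inl v)) 1 := rfl
  rw [h0, h]

lemma phi_monomial (S : Set (Fin n)) (a b : Fin c → Fin n)
    {d : (Fin n ⊕ Fin n) →₀ ℕ} (hgood : Good S d) :
    aeval (f S a b) (monomial d (1 : K)) = monomial (E a b d) (1 : K) := by
  rw [aeval_monomial]
  rw [Finsupp.prod_fintype _ _ (fun w => pow_zero _)]
  rw [map_one, one_mul]
  have hfac : ∀ w : Fin n ⊕ Fin n,
      f S a b w ^ d w = monomial (d w • expOf a b w) (1 : K) := by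
    intro w
    by_cases h0 : d w = 0
    · rw [h0, pow_zero, zero_smul]; simp [monomial_zero']
    · have hnb : ¬ (Sum.elim (· ∈ S) (· ∈ S) w) := by
        rcases w with s | s
        · exact fun hs => h0 (hgood s hs).1
        · exact fun hs => h0 (hgood s hs).2
      unfold f
      rw [if_neg hnb, monomial_pow, one_pow]
  simp only [hfac]
  rw [prod_monomial]
  rfl

lemma phi_monomial_bad (S : Set (Fin n)) (a b : Fin c → Fin n)
    {d : (Fin n ⊕ Fin n) →₀ ℕ} (hbad : ¬ Good S d) (k : K) :
    aeval (f S a b) (monomial d k) = (0 : MvPolynomial (Fin n ⊕ (Fin n ⊕ Fin c)) K) := by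
  rw [aeval_monomial]
  unfold Good at hbad
  push_neg at hbad
  obtain ⟨s, hs, hne⟩ := hbad
  obtain ⟨w, hw, hbadw⟩ : ∃ w : Fin n ⊕ Fin n, d w ≠ 0 ∧ Sum.elim (· ∈ S) (· ∈ S) w := by
    by_cases h1 : d (Sum.inl s) = 0
    · exact ⟨Sum.inr s, fun h => hne h1 h, hs⟩
    · exact ⟨Sum.inl s, h1, hs⟩
  have : (Finsupp.prod d fun w e => f S a b w ^ e) =
      (0 : MvPolynomial (Fin n ⊕ (Fin n ⊕ Fin c)) K) := by
    apply Finset.prod_eq_zero (Finsupp.mem_support_iff.mpr hw)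
    unfold f
    simp only [if_pos hbadw, zero_pow hw]
  rw [this, mul_zero]

lemma monomial_bad_mem (S : Set (Fin n)) (a b : Fin c → Fin n)
    {d : (Fin n ⊕ Fin n) →₀ ℕ} (hbad : ¬ Good S d) :
    (monomial d (1 : K)) ∈ Ideal.span (gens S a b) := by
  unfold Good at hbad
  push_neg at hbad
  obtain ⟨s, hs, hne⟩ := hbad
  obtain ⟨w, hw, hgen⟩ : ∃ w : Fin n ⊕ Fin n, d w ≠ 0 ∧
      (X w : MvPolynomial (Fin n ⊕ Fin n) K) ∈ gens S a b := by
    by_cases h1 : d (Sum.inl s) = 0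
    · exact ⟨Sum.inr s, fun h => hne h1 h, by left; exact ⟨s, hs, Or.inr rfl⟩⟩
    · exact ⟨Sum.inl s, h1, by left; exact ⟨s, hs, Or.inl rfl⟩⟩
  have hle : Finsupp.single w 1 ≤ d := Finsupp.single_le_iff.mpr (by omega)
  have hXdef : (X w : MvPolynomial (Fin n ⊕ Fin n) K) =
      monomial (Finsupp.single w 1) 1 := rfl
  have heq : (monomial d (1 : K)) = X w * monomial (d - Finsupp.single w 1) 1 := by
    rw [hXdef, monomial_mul, one_mul, add_tsub_cancel_of_le hle]
  rw [heq]
  exact Ideal.mul_mem_right _ _ (Ideal.subset_span hgen)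

/-- termination measure: weighted sum of y-indices -/
def mu (d : (Fin n ⊕ Fin n) →₀ ℕ) : ℕ := ∑ v : Fin n, d (.inr v) * (v : ℕ)

lemma mu_add (d e : (Fin n ⊕ Fin n) →₀ ℕ) : mu (d + e) = mu d + mu e := by
  simp [mu, add_mul, Finset.sum_add_distrib]

lemma mu_single_inl (u : Fin n) (k : ℕ) : mu (Finsupp.single (Sum.inl u) k) = 0 := by
  simp [mu, Finsupp.single_apply]

lemma mu_single_inr (v : Fin n) (k : ℕ) :
    mu (Finsupp.single (Sum.inr v) k) = k * (v : ℕ) := by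
  rw [mu, Finset.sum_eq_single v]
  · simp
  · intro u _ hu
    simp [Finsupp.single_apply, Ne.symm hu]
  · simp

lemma core (S : Set (Fin n)) (a b : Fin c → Fin n)
    (hdisj : ∀ i j, i ≠ j → ∀ v : Fin n, ¬ (a i ≤ v ∧ v ≤ b i ∧ a j ≤ v ∧ v ≤ b j))
    (hS : ∀ i, ∀ v : Fin n, a i ≤ v → v ≤ b i → v ∉ S) :
    ∀ m : ℕ, ∀ d : (Fin n ⊕ Fin n) →₀ ℕ, mu d = m → Good S d →
      (monomial d (1 : K)) - monomial (N a b (E a b d)) 1 ∈ Ideal.span (gens S a b) := by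
  intro m
  induction m using Nat.strong_induction_on with
  | _ m IH =>
    intro d hm hgood
    by_cases hnorm : Normal a b d
    · rw [N_E a b hdisj hnorm, sub_self]; exact zero_mem _
    · unfold Normal at hnorm
      push_neg at hnorm
      obtain ⟨i, u, v, hu, hv, huv, hdu, hdv⟩ := hnorm
      have huab := Finset.mem_Icc.mp hu
      have hvab := Finset.mem_Icc.mp hv
      have hunotS : u ∉ S := hS i u huab.1 huab.2
      have hvnotS : v ∉ S := hS i v hvab.1 hvab.2
      set s0 : (Fin n ⊕ Fin n) →₀ ℕ :=
        Finsupp.single (.inl u) 1 + Finsupp.single (.inr v) 1 with hs0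
      set s1 : (Fin n ⊕ Fin n) →₀ ℕ :=
        Finsupp.single (.inl v) 1 + Finsupp.single (.inr u) 1 with hs1
      have hle : s0 ≤ d := by
        rw [Finsupp.le_def]
        intro x
        rw [hs0, Finsupp.add_apply]
        rcases x with x | x
        · rcases eq_or_ne u x with rfl | h
          · rw [Finsupp.single_eq_same]
            have h2 : (Finsupp.single (Sum.inr v) 1 : (Fin n ⊕ Fin n) →₀ ℕ)
                (Sum.inl u) = 0 := by simp
            rw [h2]; omega
          · simp [Finsupp.single_apply, h]
        · rcases eq_or_ne v x with rfl | h
          · rw [Finsupp.single_eq_same]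
            have h2 : (Finsupp.single (Sum.inl u) 1 : (Fin n ⊕ Fin n) →₀ ℕ)
                (Sum.inr v) = 0 := by simp
            rw [h2]; omega
          · simp [Finsupp.single_apply, h]
      set d2 : (Fin n ⊕ Fin n) →₀ ℕ := d - s0 with hd2
      have hd2add : d2 + s0 = d := tsub_add_cancel_of_le hle
      set d' : (Fin n ⊕ Fin n) →₀ ℕ := d2 + s1 with hd'
      have hiu : iOf a b u = some i := mem_iOf hdisj hu
      have hiv : iOf a b v = some i := mem_iOf hdisj hv
      have hEswap : expOf a b (Sum.inl u) + expOf a b (Sum.inr v) =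
          expOf a b (Sum.inl v) + expOf a b (Sum.inr u) := by
        rw [expOf_inl_eq, expOf_inl_eq, expOf_inr_eq a b hiu, expOf_inr_eq a b hiv]
        abel
      have hE' : E a b d' = E a b d := by
        conv_rhs => rw [← hd2add]
        rw [hd', hs1, hs0, E_add, E_add, E_add, E_add, E_single, E_single,
          E_single, E_single, one_smul, one_smul, one_smul, one_smul, hEswap]
      have hgood2 : Good S d2 := hgood.tsub
      have hgood' : Good S d' :=
        hgood2.add ((Good.single_inl hvnotS 1).add (Good.single_inr hunotS 1))
      have huvn : (u : ℕ) < (v : ℕ) := huv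
      have hmu' : mu d' < m := by
        have h1 : mu d = mu d2 + mu s0 := by rw [← hd2add, mu_add]
        have h2 : mu d' = mu d2 + mu s1 := by rw [hd', mu_add]
        have h3 : mu s0 = (v : ℕ) := by
          rw [hs0, mu_add, mu_single_inl, mu_single_inr, one_mul, zero_add]
        have h4 : mu s1 = (u : ℕ) := by
          rw [hs1, mu_add, mu_single_inl, mu_single_inr, one_mul, zero_add]
        omega
      have hXdef : ∀ w : Fin n ⊕ Fin n, (X w : MvPolynomial (Fin n ⊕ Fin n) K) =
          monomial (Finsupp.single w 1) 1 := fun _ => rfl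
      have hx : (monomial d (1 : K)) - monomial d' 1 = fm u v * monomial d2 1 := by
        rw [fm, xx, yy, xx, yy, sub_mul, hXdef, hXdef, hXdef, hXdef]
        simp only [monomial_mul, one_mul, mul_one]
        rw [show Finsupp.single (Sum.inl u) 1 + Finsupp.single (Sum.inr v) 1 + d2 = d by
          rw [← hs0, add_comm, hd2add]]
        rw [show Finsupp.single (Sum.inl v) 1 + Finsupp.single (Sum.inr u) 1 + d2 = d' by
          rw [← hs1, add_comm, ← hd']]
      have hfm_mem : fm u v * monomial d2 (1 : K) ∈ Ideal.span (gens S a b) :=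
        Ideal.mul_mem_right _ _ (Ideal.subset_span
          (by right; exact ⟨i, u, v, huab.1, huv, hvab.2, rfl⟩))
      have hIH := IH (mu d') hmu' d' rfl hgood'
      rw [hE'] at hIH
      have hsum := add_mem (hx ▸ hfm_mem) hIH
      rw [sub_add_sub_cancel] at hsum
      exact hsum

/-- linear section sending image monomials to normal-form monomials -/
noncomputable def sigma (a b : Fin c → Fin n)
    (q : MvPolynomial (Fin n ⊕ (Fin n ⊕ Fin c)) K) : MvPolynomial (Fin n ⊕ Fin n) K :=
  Finsupp.sum (AddMonoidAlgebra.coeff q) fun e k => monomial (N a b e) k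

lemma sigma_zero (a b : Fin c → Fin n) :
    sigma a b (0 : MvPolynomial (Fin n ⊕ (Fin n ⊕ Fin c)) K) = 0 :=
  Finsupp.sum_zero_index

lemma sigma_add (a b : Fin c → Fin n)
    (q r : MvPolynomial (Fin n ⊕ (Fin n ⊕ Fin c)) K) :
    sigma a b (q + r) = sigma a b q + sigma a b r :=
  Finsupp.sum_add_index' (fun e => by simp) (fun e k₁ k₂ => by
    rw [map_add])

lemma sigma_monomial (a b : Fin c → Fin n) (e : (Fin n ⊕ (Fin n ⊕ Fin c)) →₀ ℕ) (k : K) :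
    sigma a b (monomial e k) = monomial (N a b e) k := by
  rw [sigma]
  exact sum_monomial_eq (by simp)

lemma key (S : Set (Fin n)) (a b : Fin c → Fin n)
    (hdisj : ∀ i j, i ≠ j → ∀ v : Fin n, ¬ (a i ≤ v ∧ v ≤ b i ∧ a j ≤ v ∧ v ≤ b j))
    (hS : ∀ i, ∀ v : Fin n, a i ≤ v → v ≤ b i → v ∉ S)
    (p : MvPolynomial (Fin n ⊕ Fin n) K) :
    p - sigma a b (aeval (f S a b) p) ∈ Ideal.span (gens S a b) := by
  induction p using MvPolynomial.induction_on' with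
  | add p q hp hq =>
    rw [map_add, sigma_add]
    have h := add_mem hp hq
    convert h using 1
    ring
  | monomial d k =>
    have h1 : (monomial d k : MvPolynomial (Fin n ⊕ Fin n) K) = C k * monomial d 1 := by
      rw [C_mul_monomial, mul_one]
    by_cases hgood : Good S d
    · rw [h1, map_mul, aeval_C, phi_monomial S a b hgood]
      have h2 : algebraMap K (MvPolynomial (Fin n ⊕ (Fin n ⊕ Fin c)) K) k *
          monomial (E a b d) (1 : K) = monomial (E a b d) k := by
        rw [algebraMap_eq, C_mul_monomial, mul_one]
      rw [h2, sigma_monomial]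
      have h3 : (monomial (N a b (E a b d)) k : MvPolynomial (Fin n ⊕ Fin n) K) =
          C k * monomial (N a b (E a b d)) 1 := by
        rw [C_mul_monomial, mul_one]
      rw [h3, ← mul_sub]
      exact Ideal.mul_mem_left _ _ (core S a b hdisj hS (mu d) d rfl hgood)
    · rw [phi_monomial_bad S a b hgood k, sigma_zero, sub_zero, h1]
      exact Ideal.mul_mem_left _ _ (monomial_bad_mem S a b hgood)

end SpanPrimeAux

open SpanPrimeAux in
/-- Let `P = (x_s, y_s : s ∈ S) + I₂(X_{[a₁,b₁]}) + ... + I₂(X_{[a_c,b_c]})`, where the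
intervals `[aᵢ,bᵢ]` are pairwise disjoint and contained in `{1,...,n} ∖ S`. Then `P`
is a prime ideal. -/
theorem span_isPrime {K : Type*} [Field K] {n : ℕ} (S : Set (Fin n)) (c : ℕ)
    (a b : Fin c → Fin n) (hab : ∀ i, a i ≤ b i)
    (hdisj : ∀ i j, i ≠ j → ∀ v : Fin n, ¬ (a i ≤ v ∧ v ≤ b i ∧ a j ≤ v ∧ v ≤ b j))
    (hS : ∀ i, ∀ v : Fin n, a i ≤ v → v ≤ b i → v ∉ S) :
    (Ideal.span
      (({p | ∃ s ∈ S, p = xx s ∨ p = yy s} ∪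
        {p | ∃ i, ∃ u v : Fin n, a i ≤ u ∧ u < v ∧ v ≤ b i ∧ p = fm u v}) :
        Set (MvPolynomial (Fin n ⊕ Fin n) K))).IsPrime := by
  show (Ideal.span (gens (K := K) S a b)).IsPrime
  have hker : Ideal.span (gens (K := K) S a b) =
      RingHom.ker ((aeval (f (K := K) S a b)).toRingHom :
        MvPolynomial (Fin n ⊕ Fin n) K →+* MvPolynomial (Fin n ⊕ (Fin n ⊕ Fin c)) K) := by
    apply le_antisymm
    · rw [Ideal.span_le]
      rintro p hp
      simp only [SetLike.mem_coe, RingHom.mem_ker]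
      rcases hp with ⟨s, hs, rfl | rfl⟩ | ⟨i, u, v, hau, huv, hvb, rfl⟩
      · show aeval (f (K := K) S a b) (xx s) = 0
        rw [xx, aeval_X]
        unfold f
        exact if_pos hs
      · show aeval (f (K := K) S a b) (yy s) = 0
        rw [yy, aeval_X]
        unfold f
        exact if_pos hs
      · show aeval (f (K := K) S a b) (fm u v) = 0
        have hu : u ∈ Finset.Icc (a i) (b i) :=
          Finset.mem_Icc.mpr ⟨hau, le_trans (le_of_lt huv) hvb⟩
        have hv : v ∈ Finset.Icc (a i) (b i) :=
          Finset.mem_Icc.mpr ⟨le_trans hau (le_of_lt huv), hvb⟩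
        have hiu := mem_iOf hdisj hu
        have hiv := mem_iOf hdisj hv
        have hunotS : u ∉ S := hS i u hau (le_trans (le_of_lt huv) hvb)
        have hvnotS : v ∉ S := hS i v (le_trans hau (le_of_lt huv)) hvb
        have hfu : f (K := K) S a b (Sum.inl u) = monomial (expOf a b (Sum.inl u)) 1 := by
          unfold f; rw [if_neg]; exact hunotS
        have hfv : f (K := K) S a b (Sum.inl v) = monomial (expOf a b (Sum.inl v)) 1 := by
          unfold f; rw [if_neg]; exact hvnotS
        have hfu' : f (K := K) S a b (Sum.inr u) = monomial (expOf a b (Sum.inr u)) 1 := by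
          unfold f; rw [if_neg]; exact hunotS
        have hfv' : f (K := K) S a b (Sum.inr v) = monomial (expOf a b (Sum.inr v)) 1 := by
          unfold f; rw [if_neg]; exact hvnotS
        rw [fm, xx, yy, xx, yy, map_sub, map_mul, map_mul, aeval_X, aeval_X, aeval_X,
          aeval_X, hfu, hfv, hfu', hfv', expOf_inl_eq, expOf_inl_eq,
          expOf_inr_eq a b hiu, expOf_inr_eq a b hiv]
        simp only [monomial_mul, one_mul]
        rw [sub_eq_zero]
        congr 1
        abel
    · intro p hp
      rw [RingHom.mem_ker] at hp
      have hk := key S a b hdisj hS p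
      have hp' : aeval (f (K := K) S a b) p = 0 := hp
      rw [hp', sigma_zero, sub_zero] at hk
      exact hk
  rw [hker]
  exact RingHom.ker_isPrime _
end
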